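/- For any β ∈ R, the open set {(x,t) ∈ (0,π) × (R/2πZ) : sin(x)·cos(t−β) ≠ 0} has exactly two connected components. -/

import Mathlib

open Real

/-- The identification relation on `ℝ²` defining the cylinder whose circle has
circumference `c`: `(x,y) ~ (x, y + ck)`, `k ∈ ℤ`. -/
def cylRel (c : ℝ) (p q : ℝ × ℝ) : Prop :=
  q.1 = p.1 ∧ ∃ k : ℤ, q.2 = p.2 + c * k

/-- The flat cylinder `(0,π) × (ℝ/2πℤ)` lives inside the quotient of `ℝ²` by a
vertical translation of length `2π`. -/
def CylOne : Type := Quot (cylRel (2 * π))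

instance : TopologicalSpace CylOne :=
  (instTopologicalSpaceQuot : TopologicalSpace (Quot (cylRel (2 * π))))

open Set

private lemma cylRel_equivalence (c : ℝ) : Equivalence (cylRel c) := by
  refine ⟨fun p => ⟨rfl, 0, by simp⟩, ?_, ?_⟩
  · rintro p q ⟨h1, k, h2⟩
    exact ⟨h1.symm, -k, by push_cast; linarith⟩
  · rintro p q r ⟨h1, k, h2⟩ ⟨h3, m, h4⟩
    exact ⟨h3.trans h1, k + m, by push_cast; linarith⟩

private lemma quot_mk_eq_iff (c : ℝ) (p q : ℝ × ℝ) :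
    Quot.mk (cylRel c) p = Quot.mk (cylRel c) q ↔ cylRel c p q :=
  ⟨fun h => (cylRel_equivalence c).eqvGen_iff.mp (Quot.eqvGen_exact h),
   fun h => Quot.sound h⟩

private lemma isOpen_quot_img {c : ℝ} {u v : Set ℝ} (hu : IsOpen u) (hv : IsOpen v) :
    IsOpen (Quot.mk (cylRel c) '' (u ×ˢ v)) := by
  rw [isOpen_coinduced]
  have hpre : Quot.mk (cylRel c) ⁻¹' (Quot.mk (cylRel c) '' (u ×ˢ v)) =
      ⋃ k : ℤ, u ×ˢ ((fun y : ℝ => y + c * k) ⁻¹' v) := by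
    ext p
    simp only [Set.mem_preimage, Set.mem_image, Set.mem_iUnion, Set.mem_prod]
    constructor
    · rintro ⟨q, ⟨hq1, hq2⟩, hq⟩
      rw [quot_mk_eq_iff] at hq
      obtain ⟨h1, k, h2⟩ := hq
      refine ⟨-k, h1 ▸ hq1, ?_⟩
      have : p.2 + c * ((-k : ℤ) : ℝ) = q.2 := by push_cast; linarith
      rw [this]; exact hq2
    · rintro ⟨k, h1, h2⟩
      refine ⟨(p.1, p.2 + c * k), ⟨h1, h2⟩, ?_⟩
      rw [quot_mk_eq_iff]
      exact ⟨rfl, -k, by push_cast; ring⟩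
  rw [hpre]
  exact isOpen_iUnion fun k => hu.prod (hv.preimage (by fun_prop))

theorem two_nodal_domains_C_one (β : ℝ) :
    Nat.card (ConnectedComponents
        ↥(Quot.mk (cylRel (2 * π)) ''
          {p : ℝ × ℝ | p.1 ∈ Set.Ioo 0 π ∧ Real.sin p.1 * Real.cos (p.2 - β) ≠ 0})) = 2 := by
  have hπ := Real.pi_pos
  set c : ℝ := 2 * π with hc
  set a : ℝ := β + π / 2 with ha
  set S : Set (ℝ × ℝ) :=
    {p : ℝ × ℝ | p.1 ∈ Set.Ioo 0 π ∧ Real.sin p.1 * Real.cos (p.2 - β) ≠ 0} with hS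
  set mk : ℝ × ℝ → Quot (cylRel c) := Quot.mk (cylRel c) with hmk
  set R₁ : Set (ℝ × ℝ) := Ioo 0 π ×ˢ Ioo a (a + π) with hR₁
  set R₂ : Set (ℝ × ℝ) := Ioo 0 π ×ˢ Ioo (a + π) (a + c) with hR₂
  set A : Set (Quot (cylRel c)) := mk '' R₁ with hA
  set B : Set (Quot (cylRel c)) := mk '' R₂ with hB
  -- the two rectangles sit inside `S`
  have hR₁S : R₁ ⊆ S := by
    rintro ⟨x, t⟩ ⟨hx, ht⟩
    refine ⟨hx, mul_ne_zero (ne_of_gt (Real.sin_pos_of_pos_of_lt_pi hx.1 hx.2)) (ne_of_lt ?_)⟩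
    apply Real.cos_neg_of_pi_div_two_lt_of_lt
    · simp only [hR₁, Set.mem_Ioo] at ht ⊢; simp only [ha] at ht; linarith [ht.1]
    · simp only [hR₁, Set.mem_Ioo] at ht; simp only [ha] at ht; linarith [ht.2]
  have hR₂S : R₂ ⊆ S := by
    rintro ⟨x, t⟩ ⟨hx, ht⟩
    refine ⟨hx, mul_ne_zero (ne_of_gt (Real.sin_pos_of_pos_of_lt_pi hx.1 hx.2)) (ne_of_gt ?_)⟩
    have h2 : Real.cos (t - β - 2 * π) = Real.cos (t - β) := Real.cos_sub_two_pi _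
    rw [← h2]
    apply Real.cos_pos_of_mem_Ioo
    simp only [Set.mem_Ioo] at ht ⊢
    simp only [ha, hc] at ht
    constructor <;> [linarith [ht.2]; linarith [ht.1]]
  -- the image of `S` is `A ∪ B`
  have hT : mk '' S = A ∪ B := by
    apply Set.Subset.antisymm
    · rintro _ ⟨p, hp, rfl⟩
      obtain ⟨hp1, hp2⟩ := hp
      have hcne : Real.cos (p.2 - β) ≠ 0 := fun h => hp2 (by rw [h, mul_zero])
      set k : ℤ := ⌊(p.2 - a) / c⌋ with hk
      set t : ℝ := p.2 - c * k with htdef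
      have hcpos : (0:ℝ) < c := by rw [hc]; linarith
      have hfl1 : (k : ℝ) ≤ (p.2 - a) / c := Int.floor_le _
      have hfl2 : (p.2 - a) / c < k + 1 := Int.lt_floor_add_one _
      have hta0 : 0 ≤ t - a := by
        have := (le_div_iff₀ hcpos).mp hfl1
        rw [htdef]; linarith
      have htac : t - a < c := by
        have := (div_lt_iff₀ hcpos).mp hfl2
        rw [htdef]; linarith
      have hcost : Real.cos (t - β) = Real.cos (p.2 - β) := by
        have : t - β = p.2 - β - k * (2 * π) := by rw [htdef, hc]; ring
        rw [this, Real.cos_sub_int_mul_two_pi]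
      have hcostne : Real.cos (t - β) ≠ 0 := by rw [hcost]; exact hcne
      have hta : t ≠ a := by
        intro h
        apply hcostne
        have : t - β = π / 2 := by rw [h, ha]; ring
        rw [this, Real.cos_pi_div_two]
      have htap : t ≠ a + π := by
        intro h
        apply hcostne
        have : t - β = π / 2 + π := by rw [h, ha]; ring
        rw [this, Real.cos_add_pi, Real.cos_pi_div_two, neg_zero]
      have hmkeq : mk p = mk (p.1, t) := by
        rw [hmk, quot_mk_eq_iff]
        exact ⟨rfl, -k, by rw [htdef]; push_cast; ring⟩
      rcases lt_trichotomy t (a + π) with hlt | heq | hgt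
      · left
        exact ⟨(p.1, t), ⟨hp1, ⟨lt_of_le_of_ne (by linarith) (Ne.symm hta), hlt⟩⟩, hmkeq.symm⟩
      · exact absurd heq htap
      · right
        exact ⟨(p.1, t), ⟨hp1, ⟨hgt, by linarith⟩⟩, hmkeq.symm⟩
    · rw [hA, hB, ← Set.image_union]
      exact Set.image_mono (Set.union_subset hR₁S hR₂S)
  -- `A` and `B` are disjoint
  have hABdisj : ∀ z, z ∈ A → z ∈ B → False := by
    rintro _ ⟨p, hp, rfl⟩ ⟨q, hq, he⟩
    rw [hmk, quot_mk_eq_iff] at he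
    obtain ⟨h1, k, h2⟩ := he
    have hp2 : p.2 ∈ Ioo a (a + π) := hp.2
    have hq2 : q.2 ∈ Ioo (a + π) (a + c) := hq.2
    simp only [Set.mem_Ioo] at hp2 hq2
    -- p.2 = q.2 + c * k
    have hck1 : c * k < 0 := by rw [hc] at *; nlinarith [hp2.2, hq2.1]
    have hck2 : -c < c * k := by rw [hc] at *; nlinarith [hp2.1, hq2.2]
    have hcpos : (0:ℝ) < c := by rw [hc]; linarith
    have hk1 : (k : ℝ) < 0 := by nlinarith
    have hk2 : (-1 : ℝ) < k := by nlinarith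
    have : (k : ℤ) < 0 := by exact_mod_cast hk1
    have : (-1 : ℤ) < k := by exact_mod_cast hk2
    omega
  -- openness and preconnectedness of `A` and `B`
  have hAopen : IsOpen A := isOpen_quot_img isOpen_Ioo isOpen_Ioo
  have hBopen : IsOpen B := isOpen_quot_img isOpen_Ioo isOpen_Ioo
  have hAconn : IsPreconnected A :=
    (isPreconnected_Ioo.prod isPreconnected_Ioo).image _ continuous_quot_mk.continuousOn
  have hBconn : IsPreconnected B :=
    (isPreconnected_Ioo.prod isPreconnected_Ioo).image _ continuous_quot_mk.continuousOn
  have hAT : A ⊆ mk '' S := hT ▸ Set.subset_union_left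
  have hBT : B ⊆ mk '' S := hT ▸ Set.subset_union_right
  -- base points
  have hpaR : ((π / 2, a + π / 2) : ℝ × ℝ) ∈ R₁ := by
    refine ⟨⟨by linarith, by linarith⟩, ⟨by linarith, by linarith⟩⟩
  have hpbR : ((π / 2, a + π + π / 2) : ℝ × ℝ) ∈ R₂ := by
    refine ⟨⟨by linarith, by linarith⟩, ⟨by linarith, by rw [hc]; linarith⟩⟩
  have hpaA : mk (π / 2, a + π / 2) ∈ A := ⟨_, hpaR, rfl⟩
  have hpbB : mk (π / 2, a + π + π / 2) ∈ B := ⟨_, hpbR, rfl⟩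
  set xa : ↥(mk '' S) := ⟨mk (π / 2, a + π / 2), hAT hpaA⟩ with hxa
  set xb : ↥(mk '' S) := ⟨mk (π / 2, a + π + π / 2), hBT hpbB⟩ with hxb
  -- subtype versions
  set uA : Set ↥(mk '' S) := Subtype.val ⁻¹' A with huA
  set uB : Set ↥(mk '' S) := Subtype.val ⁻¹' B with huB
  have huAopen : IsOpen uA := hAopen.preimage continuous_subtype_val
  have huBopen : IsOpen uB := hBopen.preimage continuous_subtype_val
  have hval : ∀ (D : Set (Quot (cylRel c))), D ⊆ mk '' S →
      IsPreconnected D → IsPreconnected (Subtype.val ⁻¹' D : Set ↥(mk '' S)) := by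
    intro D hsub hconn
    rw [← Topology.IsInducing.subtypeVal.isPreconnected_image]
    rwa [Subtype.image_preimage_coe, Set.inter_eq_right.mpr hsub]
  have huAconn : IsPreconnected uA := hval A hAT hAconn
  have huBconn : IsPreconnected uB := hval B hBT hBconn
  have hcoverX : ∀ z : ↥(mk '' S), z ∈ uA ∪ uB := by
    intro z
    rcases hT.subset z.2 with h | h
    exacts [Or.inl h, Or.inr h]
  -- every component equals that of `xa` or `xb`
  have hkeyA : ∀ z : ↥(mk '' S), z ∈ uA →
      (z : ConnectedComponents ↥(mk '' S)) = (xa : ConnectedComponents ↥(mk '' S)) := by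
    intro z hz
    exact ConnectedComponents.coe_eq_coe'.mpr
      (huAconn.subset_connectedComponent (show xa ∈ uA from hpaA) hz)
  have hkeyB : ∀ z : ↥(mk '' S), z ∈ uB →
      (z : ConnectedComponents ↥(mk '' S)) = (xb : ConnectedComponents ↥(mk '' S)) := by
    intro z hz
    exact ConnectedComponents.coe_eq_coe'.mpr
      (huBconn.subset_connectedComponent (show xb ∈ uB from hpbB) hz)
  refine Nat.card_eq_two_iff.mpr
    ⟨(xa : ConnectedComponents ↥(mk '' S)), (xb : ConnectedComponents ↥(mk '' S)), ?_, ?_⟩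
  · intro h
    have hmem : xa ∈ connectedComponent xb := ConnectedComponents.coe_eq_coe'.mp h
    obtain ⟨w, hw⟩ := isPreconnected_connectedComponent (x := xb)
      uA uB huAopen huBopen (fun z _ => hcoverX z)
      ⟨xa, hmem, hpaA⟩ ⟨xb, mem_connectedComponent, hpbB⟩
    exact hABdisj _ hw.2.1 hw.2.2
  · ext z
    simp only [Set.mem_insert_iff, Set.mem_singleton_iff, Set.mem_univ, iff_true]
    obtain ⟨w, rfl⟩ := ConnectedComponents.surjective_coe z
    rcases hcoverX w with hw | hw
    · exact Or.inl (hkeyA w hw)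
    · exact Or.inr (hkeyB w hw)
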